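/- Setting u = √5·i, v = j − k, w = uv in ℍ(K), one has u² = −5, v² = −2 and uv = −vu, so that D = ℚ-span of {1,u,v,w} is a quaternion algebra over ℚ of type (−5,−2/ℚ), and ℍ(K) = K ⊗_ℚ D. Moreover, for α ∈ K and x ∈ D, η(αx) = α'·x̄. -/

import Mathlib

open Polynomial Quaternion

noncomputable section

set_option maxRecDepth 8000
set_option synthInstance.maxHeartbeats 1000000
set_option maxHeartbeats 1000000

def f5 : ℚ[X] := X ^ 2 - C 5

instance f5_irred : Fact (Irreducible f5) := ⟨by
  unfold f5
  apply X_pow_sub_C_irreducible_of_prime Nat.prime_two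
  intro b hb
  have h5 : Irrational (Real.sqrt 5) := (Nat.prime_five).irrational_sqrt
  have hb' : ((b : ℝ)) ^ 2 = 5 := by exact_mod_cast congrArg (fun q : ℚ => (q : ℝ)) hb
  have heq : Real.sqrt 5 = |(b : ℝ)| := by
    rw [← hb', Real.sqrt_sq_eq_abs]
  rw [heq] at h5
  exact h5 ⟨|b|, by push_cast; ring⟩⟩

abbrev K : Type := AdjoinRoot f5

instance : Field K := inferInstance
instance : SMul K (Quaternion K) := inferInstance
instance : Algebra K (Quaternion K) := inferInstance

def sqrt5 : K := AdjoinRoot.root f5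

lemma sqrt5_sq : sqrt5 ^ 2 = 5 := by
  have h : AdjoinRoot.mk f5 (X ^ 2 - C 5) = 0 := AdjoinRoot.mk_self
  rw [map_sub, map_pow, AdjoinRoot.mk_X, AdjoinRoot.mk_C, sub_eq_zero] at h
  simpa [sqrt5, map_ofNat] using h

def conjK : K →+* K :=
  AdjoinRoot.lift (algebraMap ℚ K) (-sqrt5) (by
    simp only [f5, eval₂_sub, eval₂_pow, eval₂_X, eval₂_C, sub_eq_zero]
    have h : (-sqrt5) ^ 2 = sqrt5 ^ 2 := by ring
    rw [h, sqrt5_sq]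
    simp)

def τ : K := (1 + sqrt5) / 2

abbrev ℍK := Quaternion K

def twist (x : ℍK) : ℍK := ⟨conjK x.re, conjK x.imI, conjK x.imK, conjK x.imJ⟩

def icoB : Fin 4 → ℍK :=
  ![1, ⟨0,1,0,0⟩, ⟨1/2,1/2,1/2,1/2⟩, ⟨(1-τ)/2, τ/2, 0, 1/2⟩]

def Ico : AddSubgroup ℍK :=
  AddSubgroup.closure (Set.range icoB ∪ Set.range fun i => τ • icoB i)

def lB : Fin 4 → ℍK :=
  ![1, ⟨-(1/2),1/2,1/2,1/2⟩, ⟨0,-1,0,0⟩, ⟨0,1/2,(τ-1)/2,-(τ/2)⟩]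

def LatA4 : AddSubgroup ℍK := AddSubgroup.closure (Set.range lB)

def LatATau : AddSubgroup ℍK :=
  AddSubgroup.closure (Set.range lB ∪ Set.range fun i => τ • lB i)


def u : ℍK := ⟨0, sqrt5, 0, 0⟩

def v : ℍK := ⟨0, 0, 1, -1⟩

def w : ℍK := u * v

@[simp] lemma u_re : u.re = 0 := rfl
@[simp] lemma u_imI : u.imI = sqrt5 := rfl
@[simp] lemma u_imJ : u.imJ = 0 := rfl
@[simp] lemma u_imK : u.imK = 0 := rfl
@[simp] lemma v_re : v.re = 0 := rfl
@[simp] lemma v_imI : v.imI = 0 := rfl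
@[simp] lemma v_imJ : v.imJ = 1 := rfl
@[simp] lemma v_imK : v.imK = -1 := rfl
@[simp] lemma twist_re (x : ℍK) : (twist x).re = conjK x.re := rfl
@[simp] lemma twist_imI (x : ℍK) : (twist x).imI = conjK x.imI := rfl
@[simp] lemma twist_imJ (x : ℍK) : (twist x).imJ = conjK x.imK := rfl
@[simp] lemma twist_imK (x : ℍK) : (twist x).imK = conjK x.imJ := rfl
@[simp] lemma algQ_re (q : ℚ) : (algebraMap ℚ ℍK q).re = algebraMap ℚ K q := rfl
@[simp] lemma algQ_imI (q : ℚ) : (algebraMap ℚ ℍK q).imI = 0 := rfl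
@[simp] lemma algQ_imJ (q : ℚ) : (algebraMap ℚ ℍK q).imJ = 0 := rfl
@[simp] lemma algQ_imK (q : ℚ) : (algebraMap ℚ ℍK q).imK = 0 := rfl

lemma sqrt5_ne_zero : sqrt5 ≠ 0 := by
  intro h
  have := sqrt5_sq
  rw [h] at this
  norm_num at this

lemma conjK_sqrt5 : conjK sqrt5 = -sqrt5 := AdjoinRoot.lift_root _

lemma conjK_algebraMap (q : ℚ) : conjK (algebraMap ℚ K q) = algebraMap ℚ K q := by
  rw [eq_ratCast (algebraMap ℚ K) q, map_ratCast]

lemma u_mul_u : u * u = (-5 : ℚ) • (1 : ℍK) := by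
  ext <;> simp [QuaternionAlgebra.ext_iff, Quaternion.re_mul, Quaternion.imI_mul, Quaternion.imJ_mul, Quaternion.imK_mul] <;> linear_combination sqrt5_sq

lemma v_mul_v : v * v = (-2 : ℚ) • (1 : ℍK) := by
  ext <;> simp [Quaternion.re_mul, Quaternion.imI_mul, Quaternion.imJ_mul, Quaternion.imK_mul] <;> norm_num

lemma w_eq : w = (⟨0, 0, sqrt5, sqrt5⟩ : ℍK) := by
  ext <;> simp [w, Quaternion.re_mul, Quaternion.imI_mul, Quaternion.imJ_mul, Quaternion.imK_mul]

@[simp] lemma w_re : w.re = 0 := by rw [w_eq]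
@[simp] lemma w_imI : w.imI = 0 := by rw [w_eq]
@[simp] lemma w_imJ : w.imJ = sqrt5 := by rw [w_eq]
@[simp] lemma w_imK : w.imK = sqrt5 := by rw [w_eq]

lemma v_mul_u : v * u = -w := by
  ext <;> simp [Quaternion.re_mul, Quaternion.imI_mul, Quaternion.imJ_mul, Quaternion.imK_mul] <;> ring

def Dbasis : QuaternionAlgebra.Basis ℍK (-5 : ℚ) 0 (-2 : ℚ) where
  i := u
  j := v
  k := w
  i_mul_i := by rw [u_mul_u, zero_smul, add_zero]
  j_mul_j := v_mul_v
  i_mul_j := rfl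
  j_mul_i := by rw [v_mul_u, zero_smul, zero_sub]

def φ : ℍ[ℚ, -5, -2] →ₐ[ℚ] ℍK := Dbasis.liftHom

lemma φ_apply (x : ℍ[ℚ, -5, -2]) :
    φ x = algebraMap ℚ ℍK x.re + x.imI • u + x.imJ • v + x.imK • w := rfl

lemma smul_quat (q : ℚ) (x : ℍK) :
    q • x = (⟨q • x.re, q • x.imI, q • x.imJ, q • x.imK⟩ : ℍK) := rfl

example (q : ℚ) : (q • (1:K)) = algebraMap ℚ K q := by
  simp [Algebra.smul_def]

lemma φ_comp (x : ℍ[ℚ, -5, -2]) :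
    φ x = (⟨algebraMap ℚ K x.re, algebraMap ℚ K x.imI * sqrt5,
      algebraMap ℚ K x.imJ + algebraMap ℚ K x.imK * sqrt5,
      -algebraMap ℚ K x.imJ + algebraMap ℚ K x.imK * sqrt5⟩ : ℍK) := by
  have hA : ∀ q : ℚ, algebraMap ℚ ℍK q = (⟨algebraMap ℚ K q,0,0,0⟩ : ℍK) := fun q => rfl
  rw [φ_apply]
  ext <;> simp [Algebra.smul_def] <;> ring

lemma φ_inj : Function.Injective φ := by
  intro x y h
  rw [← sub_eq_zero, ← map_sub] at h
  rw [← sub_eq_zero]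
  set z := x - y with hz
  have h1 := congrArg QuaternionAlgebra.re h
  have h2 := congrArg QuaternionAlgebra.imI h
  have h3 := congrArg QuaternionAlgebra.imJ h
  have h4 := congrArg QuaternionAlgebra.imK h
  rw [φ_comp] at h1 h2 h3 h4
  simp only [Quaternion.re_zero, Quaternion.imI_zero,
    Quaternion.imJ_zero, Quaternion.imK_zero] at h1 h2 h3 h4
  have inj := (algebraMap ℚ K).injective
  have hre : z.re = 0 := by apply inj; simpa using h1
  have himI : z.imI = 0 := by
    apply inj
    have := mul_eq_zero.mp h2
    simpa [sqrt5_ne_zero] using this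
  have himK : z.imK = 0 := by
    apply inj
    have hsum : algebraMap ℚ K z.imK * (sqrt5 * 2) = 0 := by linear_combination h3 + h4
    rcases mul_eq_zero.mp hsum with h | h
    · simpa using h
    · exact absurd h (by simp [sqrt5_ne_zero])
  have himJ : z.imJ = 0 := by
    apply inj
    have hd : algebraMap ℚ K z.imJ * 2 = 0 := by
      have hK : algebraMap ℚ K z.imK = 0 := by rw [himK]; simp
      linear_combination h3 - h4
    simpa using (mul_eq_zero.mp hd).resolve_right (by norm_num)
  ext <;> simp [hre, himI, himJ, himK]

lemma φ_range : Set.range φ = (Submodule.span ℚ ({1, u, v, w} : Set ℍK) : Set ℍK) := by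
  apply Set.Subset.antisymm
  · rintro _ ⟨x, rfl⟩
    rw [φ_apply]
    have h1 : (1:ℍK) ∈ Submodule.span ℚ ({1, u, v, w} : Set ℍK) :=
      Submodule.subset_span (by simp)
    have hu : u ∈ Submodule.span ℚ ({1, u, v, w} : Set ℍK) :=
      Submodule.subset_span (by simp)
    have hv : v ∈ Submodule.span ℚ ({1, u, v, w} : Set ℍK) :=
      Submodule.subset_span (by simp)
    have hw : w ∈ Submodule.span ℚ ({1, u, v, w} : Set ℍK) :=
      Submodule.subset_span (by simp)
    rw [Algebra.algebraMap_eq_smul_one]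
    exact add_mem (add_mem (add_mem (Submodule.smul_mem _ _ h1) (Submodule.smul_mem _ _ hu))
      (Submodule.smul_mem _ _ hv)) (Submodule.smul_mem _ _ hw)
  · have : Submodule.span ℚ ({1, u, v, w} : Set ℍK) ≤ Subalgebra.toSubmodule φ.range := by
      rw [Submodule.span_le]
      rintro y hy
      simp only [Set.mem_insert_iff, Set.mem_singleton_iff] at hy
      rcases hy with rfl | rfl | rfl | rfl
      · exact ⟨1, map_one φ⟩
      · exact ⟨⟨0,1,0,0⟩, show φ ⟨0,1,0,0⟩ = u by rw [φ_apply]; simp⟩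
      · exact ⟨⟨0,0,1,0⟩, show φ ⟨0,0,1,0⟩ = v by rw [φ_apply]; simp⟩
      · exact ⟨⟨0,0,0,1⟩, show φ ⟨0,0,0,1⟩ = w by rw [φ_apply]; simp⟩
    exact this

lemma spanK_top : Submodule.span K ({1, u, v, w} : Set ℍK) = ⊤ := by
  rw [eq_top_iff]
  rintro x -
  have h1 : (1:ℍK) ∈ Submodule.span K ({1, u, v, w} : Set ℍK) :=
    Submodule.subset_span (by simp)
  have hu : u ∈ Submodule.span K ({1, u, v, w} : Set ℍK) :=
    Submodule.subset_span (by simp)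
  have hv : v ∈ Submodule.span K ({1, u, v, w} : Set ℍK) :=
    Submodule.subset_span (by simp)
  have hw : w ∈ Submodule.span K ({1, u, v, w} : Set ℍK) :=
    Submodule.subset_span (by simp)
  have hx : x = x.re • 1 + (x.imI / sqrt5) • u + ((x.imJ - x.imK)/2) • v
      + ((x.imJ + x.imK)/(2*sqrt5)) • w := by
    ext <;> simp [smul_eq_mul] <;> field_simp [sqrt5_ne_zero] <;> ring
  rw [hx]
  exact add_mem (add_mem (add_mem (Submodule.smul_mem _ _ h1) (Submodule.smul_mem _ _ hu))
    (Submodule.smul_mem _ _ hv)) (Submodule.smul_mem _ _ hw)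

lemma twist_add (a b : ℍK) : twist (a + b) = twist a + twist b := by
  ext <;> simp

lemma twist_key : ∀ α : K, ∀ x ∈ Submodule.span ℚ ({1, u, v, w} : Set ℍK),
    twist (α • x) = conjK α • star x := by
  have H : ∀ x ∈ Submodule.span ℚ ({1, u, v, w} : Set ℍK), ∀ α : K,
      twist (α • x) = conjK α • star x := by
    intro x hx
    induction hx using Submodule.span_induction with
    | mem y hy =>
      simp only [Set.mem_insert_iff, Set.mem_singleton_iff] at hy
      rcases hy with rfl | rfl | rfl | rfl
      · intro α; ext <;> simp [smul_eq_mul]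
      · intro α; ext <;> simp [smul_eq_mul, conjK_sqrt5] <;> ring
      · intro α; ext <;> simp [smul_eq_mul]
      · intro α; ext <;> simp [smul_eq_mul, conjK_sqrt5] <;> ring
    | zero => intro α; simp only [smul_zero, star_zero]; ext <;> simp
    | add a b _ _ ha hb =>
      intro α
      rw [smul_add, twist_add, star_add, smul_add, ha α, hb α]
    | smul q y _ hy =>
      intro α
      have h1 : α • q • y = (α * algebraMap ℚ K q) • y := by
        rw [← algebraMap_smul K q y, smul_smul]
      rw [h1, hy, Quaternion.star_smul, ← algebraMap_smul K q (star y), smul_smul, map_mul,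
        conjK_algebraMap]
  intro α x hx
  exact H x hx α

/-- u = √5·i, v = j−k, w = uv satisfy u² = −5, v² = −2, uv = −vu, the
ℚ-span D of {1,u,v,w} is a quaternion algebra over ℚ of type (−5,−2/ℚ),
ℍ(K) = K·D (i.e. K ⊗_ℚ D), and η(αx) = α'·x̄ for α ∈ K, x ∈ D. -/
theorem quaternion_subalgebra_D :
    u ^ 2 = -5 ∧ v ^ 2 = -2 ∧ u * v = -(v * u) ∧
    (∃ φ : ℍ[ℚ, -5, -2] →ₐ[ℚ] ℍK, Function.Injective φ ∧
      Set.range φ = (Submodule.span ℚ ({1, u, v, w} : Set ℍK) : Set ℍK)) ∧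
    Submodule.span K ({1, u, v, w} : Set ℍK) = ⊤ ∧
    (∀ α : K, ∀ x ∈ Submodule.span ℚ ({1, u, v, w} : Set ℍK),
      twist (α • x) = conjK α • star x) := by
  refine ⟨?_, ?_, ?_, ⟨φ, φ_inj, φ_range⟩, spanK_top, twist_key⟩
  · rw [pow_two, u_mul_u, ← Algebra.algebraMap_eq_smul_one, map_neg, map_ofNat]
  · rw [pow_two, v_mul_v, ← Algebra.algebraMap_eq_smul_one, map_neg, map_ofNat]
  · rw [v_mul_u, neg_neg]; rfl
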